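/- Let c be a real number with |c| < 1 and let x : ℕ → ℝ satisfy x(0) = 0 and x(t+1) = c·x(t) + w(t) for all t. Then for every horizon T, the sum over t from 0 to T of x(t)² is at most (1/(1−|c|))² times the sum over t from 0 to T of w(t)². -/

import Mathlib

theorem finite_horizon_l2_gain (c : ℝ) (hc : |c| < 1) (x w : ℕ → ℝ) (hx0 : x 0 = 0)
    (hrec : ∀ t, x (t + 1) = c * x t + w t) (T : ℕ) :
    ∑ t ∈ Finset.range (T + 1), (x t) ^ 2 ≤
      (1 / (1 - |c|)) ^ 2 * ∑ t ∈ Finset.range (T + 1), (w t) ^ 2 := by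
  set a := |c| with ha
  have h0 : 0 ≤ a := abs_nonneg c
  have h1 : 0 < 1 - a := by linarith
  have key : ∀ X W : ℝ, (1-a)^2*X^2 + (1-a)*(c*X+W)^2 ≤ (1-a)*X^2 + W^2 := by
    intro X W
    have hc2 : c^2 = a^2 := (sq_abs c).symm
    rcases eq_or_lt_of_le h0 with h|h
    · have hc0 : c = 0 := abs_eq_zero.mp h.symm
      subst hc0
      simp only [← h]
      nlinarith [sq_nonneg X]
    · have hid : a * (((1-a)*X^2 + W^2) - ((1-a)^2*X^2 + (1-a)*(c*X+W)^2))
          = (a*(1-a)*X - c*W)^2 := by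
        linear_combination (-(a*(1-a)*X^2) - W^2) * hc2
      nlinarith [hid, sq_nonneg (a*(1-a)*X - c*W)]
  have main : ∀ S, (1-a)^2 * ∑ t ∈ Finset.range (S+1), (x t)^2 + (1-a)*(x (S+1))^2
      ≤ ∑ t ∈ Finset.range (S+1), (w t)^2 := by
    intro S
    induction S with
    | zero =>
      have hx1 : x 1 = w 0 := by rw [hrec 0, hx0]; ring
      simp only [zero_add, Finset.sum_range_one, hx0, hx1]
      nlinarith [sq_nonneg (w 0)]
    | succ n ih =>
      rw [Finset.sum_range_succ, Finset.sum_range_succ (f := fun t => (w t)^2)]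
      have hk := key (x (n+1)) (w (n+1))
      rw [hrec (n+1)] at *
      nlinarith [hk, ih]
  have hm := main T
  have hx : 0 ≤ (1-a)*(x (T+1))^2 := by positivity
  have h2 : 0 < (1-a)^2 := by positivity
  rw [div_pow, one_pow, div_mul_eq_mul_div, le_div_iff₀ h2]
  linarith
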